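/- For every n ≥ 4, the 3-rainbow domatic number of the middle graph of the cycle C_n equals 4, i.e., d_{r3}(M(C_n)) = 4. -/

import Mathlib

open SimpleGraph Finset

/-- A `k`-rainbow dominating function on a graph `H`. -/
def IsRDF {W : Type*} (H : SimpleGraph W) (k : ℕ) (f : W → Finset (Fin k)) : Prop :=
  ∀ w, f w = ∅ → ∀ c : Fin k, ∃ u, H.Adj w u ∧ c ∈ f u

/-- The weight of a rainbow dominating function. -/
noncomputable def rdfWeight {W : Type*} [Fintype W] {k : ℕ} (f : W → Finset (Fin k)) : ℕ :=
  ∑ w, (f w).card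

/-- The `k`-rainbow domination number of a graph. -/
noncomputable def rdn {W : Type*} [Fintype W] (H : SimpleGraph W) (k : ℕ) : ℕ :=
  sInf {n | ∃ f : W → Finset (Fin k), IsRDF H k f ∧ rdfWeight f = n}

/-- The middle graph of `G`, on vertex set `V(G) ⊕ E(G)`. -/
def middleGraph {V : Type*} (G : SimpleGraph V) : SimpleGraph (V ⊕ G.edgeSet) where
  Adj x y :=
    match x, y with
    | Sum.inl _, Sum.inl _ => False
    | Sum.inl v, Sum.inr e => v ∈ (e : Sym2 V)
    | Sum.inr e, Sum.inl v => v ∈ (e : Sym2 V)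
    | Sum.inr e, Sum.inr f => e ≠ f ∧ ∃ v, v ∈ (e : Sym2 V) ∧ v ∈ (f : Sym2 V)
  symm := by
    refine ⟨?_⟩
    rintro (v | e) (w | f) h
    · exact h.elim
    · exact h
    · exact h
    · exact ⟨Ne.symm h.1, h.2.imp fun v hv => ⟨hv.2, hv.1⟩⟩
  loopless := by
    refine ⟨?_⟩
    rintro (v | e) h
    · exact h.elim
    · exact h.1 rfl

/-- The middle `k`-rainbow domination number `γ*_{rk}(G)`. -/
noncomputable def mrdn {V : Type*} [Fintype V] (G : SimpleGraph V) (k : ℕ) : ℕ :=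
  letI := Classical.decEq V
  letI : DecidableRel G.Adj := fun _ _ => Classical.dec _
  rdn (middleGraph G) k

/-- The `k`-rainbow domatic number: the maximum size of a family of `k`-rainbow
dominating functions with `∑ i |f i v| ≤ k` for each vertex `v`. -/
noncomputable def rdomatic {W : Type*} (H : SimpleGraph W) (k : ℕ) : ℕ :=
  sSup {d | ∃ F : Fin d → W → Finset (Fin k), Function.Injective F ∧
    (∀ i, IsRDF H k (F i)) ∧ ∀ w, (∑ i, (F i w).card) ≤ k}

/-- The matching number `α'(G)`. -/
noncomputable def matchingNumber {V : Type*} [Fintype V] (G : SimpleGraph V) : ℕ :=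
  sSup {n | ∃ M : Finset (Sym2 V), ↑M ⊆ G.edgeSet ∧
    (∀ e ∈ M, ∀ f ∈ M, e ≠ f → ∀ v : V, ¬(v ∈ e ∧ v ∈ f)) ∧ M.card = n}

section Prelim
variable {n : ℕ} (hn : 4 ≤ n)

lemma neZero_of_four (hn : 4 ≤ n) : NeZero n := ⟨by omega⟩

section
variable [NeZero n] (h4 : 4 ≤ n)
include h4

lemma val1 : (1 : Fin n).val = 1 := by
  rw [Fin.val_one']; exact Nat.mod_eq_of_lt (by omega)

lemma val_add_one' (a : Fin n) :
    (a + 1).val = if a.val = n - 1 then 0 else a.val + 1 := by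
  have ha := a.isLt
  rw [Fin.add_def, val1 h4]
  split
  · next h =>
      rw [h]
      have h1 : (n - 1 + 1) % n = 0 := by
        rw [Nat.sub_add_cancel (by omega), Nat.mod_self]
      exact h1
  · next h => exact Nat.mod_eq_of_lt (by omega)

lemma val_sub_one' (a : Fin n) :
    (a - 1).val = if a.val = 0 then n - 1 else a.val - 1 := by
  have ha := a.isLt
  have hv : (a - 1).val = (n - (1 : Fin n).val + a.val) % n := by
    rw [Fin.sub_def]
  rw [val1 h4] at hv
  split
  · next h =>
      rw [hv, h, Nat.add_zero]
      exact Nat.mod_eq_of_lt (by omega)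
  · next h =>
      rw [hv, Nat.mod_eq_sub_mod (by omega)]
      have h1 : n - 1 + a.val - n = a.val - 1 := by omega
      rw [h1]
      exact Nat.mod_eq_of_lt (by omega)

lemma cg_adj_iff {u v : Fin n} : (cycleGraph n).Adj u v ↔ u = v + 1 ∨ v = u + 1 := by
  rw [cycleGraph_adj']
  have h1 : ∀ a b : Fin n, (a - b).val = 1 ↔ a = b + 1 := by
    intro a b
    constructor
    · intro h
      have : a - b = 1 := by
        apply Fin.ext; rw [h, val1 h4]
      rw [sub_eq_iff_eq_add] at this
      rw [this, add_comm]
    · rintro rfl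
      rw [add_sub_cancel_left, val1 h4]
  rw [h1, h1]

lemma pair_eq {j k : Fin n} (h : s(j, j + 1) = s(k, k + 1)) : j = k := by
  rw [Sym2.eq_iff] at h
  rcases h with ⟨h1, _⟩ | ⟨h1, h2⟩
  · exact h1
  · exfalso
    subst h2
    have e1 := val_add_one' h4 (j + 1)
    have e2 := val_add_one' h4 j
    have hj := j.isLt
    rw [Fin.ext_iff] at h1
    split_ifs at e1 e2 <;> omega

def ecol (h4 : 4 ≤ n) (j : Fin n) : (cycleGraph n).edgeSet :=
  ⟨s(j, j + 1), by rw [mem_edgeSet, cg_adj_iff h4]; right; rfl⟩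

lemma ecol_inj {j k : Fin n} (h : ecol h4 j = ecol h4 k) : j = k := by
  apply pair_eq h4
  exact congrArg Subtype.val h

lemma edge_form (e : (cycleGraph n).edgeSet) : ∃ j : Fin n, e = ecol h4 j := by
  obtain ⟨e, he⟩ := e
  induction e with
  | _ u v =>
    rw [mem_edgeSet, cg_adj_iff h4] at he
    rcases he with h | h
    · exact ⟨v, by simp [ecol, ← h, Sym2.eq_swap]⟩
    · exact ⟨u, by simp [ecol, ← h]⟩

noncomputable def eidx (e : (cycleGraph n).edgeSet) : Fin n :=
  (edge_form h4 e).choose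

lemma ecol_eidx (e : (cycleGraph n).edgeSet) : ecol h4 (eidx h4 e) = e :=
  ((edge_form h4 e).choose_spec).symm

lemma eidx_ecol (j : Fin n) : eidx h4 (ecol h4 j) = j :=
  ecol_inj h4 (ecol_eidx h4 (ecol h4 j))

end
end Prelim
section Classify
variable {n : ℕ} [NeZero n] (h4 : 4 ≤ n)
include h4

local notation "H" => middleGraph (cycleGraph n)

lemma ecol_coe (j : Fin n) : ((ecol h4 j : (cycleGraph n).edgeSet) : Sym2 (Fin n)) = s(j, j + 1) :=
  rfl

lemma ne_add_one (j : Fin n) : j ≠ j + 1 := by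
  intro h
  have e2 := val_add_one' h4 j
  have hj := j.isLt
  rw [Fin.ext_iff] at h
  split_ifs at e2 <;> omega

lemma adj_vl_el (v : Fin n) : (H).Adj (Sum.inl v) (Sum.inr (ecol h4 (v - 1))) := by
  show v ∈ (s(v - 1, v - 1 + 1) : Sym2 (Fin n))
  rw [sub_add_cancel, Sym2.mem_iff]
  right; rfl

lemma adj_vl_er (v : Fin n) : (H).Adj (Sum.inl v) (Sum.inr (ecol h4 v)) := by
  show v ∈ (s(v, v + 1) : Sym2 (Fin n))
  rw [Sym2.mem_iff]; left; rfl

lemma adj_e_vl (j : Fin n) : (H).Adj (Sum.inr (ecol h4 j)) (Sum.inl j) := by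
  show j ∈ (s(j, j + 1) : Sym2 (Fin n))
  rw [Sym2.mem_iff]; left; rfl

lemma adj_e_vr (j : Fin n) : (H).Adj (Sum.inr (ecol h4 j)) (Sum.inl (j + 1)) := by
  show (j + 1) ∈ (s(j, j + 1) : Sym2 (Fin n))
  rw [Sym2.mem_iff]; right; rfl

lemma adj_e_enext (j : Fin n) :
    (H).Adj (Sum.inr (ecol h4 j)) (Sum.inr (ecol h4 (j + 1))) := by
  refine ⟨fun h => ne_add_one h4 j (ecol_inj h4 h), j + 1, ?_, ?_⟩
  · rw [ecol_coe, Sym2.mem_iff]; right; rfl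
  · rw [ecol_coe, Sym2.mem_iff]; left; rfl

lemma adj_e_eprev (j : Fin n) :
    (H).Adj (Sum.inr (ecol h4 j)) (Sum.inr (ecol h4 (j - 1))) := by
  refine ⟨fun h => ?_, j, ?_, ?_⟩
  · have := ne_add_one h4 (j - 1)
    rw [sub_add_cancel] at this
    exact this (ecol_inj h4 h).symm
  · rw [ecol_coe, Sym2.mem_iff]; left; rfl
  · show j ∈ (s(j - 1, j - 1 + 1) : Sym2 (Fin n))
    rw [sub_add_cancel, Sym2.mem_iff]; right; rfl

lemma classify_vl {v : Fin n} {u : Fin n ⊕ (cycleGraph n).edgeSet}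
    (h : (H).Adj (Sum.inl v) u) :
    u = Sum.inr (ecol h4 (v - 1)) ∨ u = Sum.inr (ecol h4 v) := by
  match u with
  | Sum.inl w => exact h.elim
  | Sum.inr e =>
    obtain ⟨j, rfl⟩ := edge_form h4 e
    have h' : v ∈ (s(j, j + 1) : Sym2 (Fin n)) := h
    rw [Sym2.mem_iff] at h'
    rcases h' with rfl | h'
    · right; rfl
    · left
      have : j = v - 1 := by rw [h', add_sub_cancel_right]
      rw [this]

lemma classify_e {j : Fin n} {u : Fin n ⊕ (cycleGraph n).edgeSet}
    (h : (H).Adj (Sum.inr (ecol h4 j)) u) :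
    u = Sum.inl j ∨ u = Sum.inl (j + 1) ∨
      u = Sum.inr (ecol h4 (j - 1)) ∨ u = Sum.inr (ecol h4 (j + 1)) := by
  match u with
  | Sum.inl v =>
    have h' : v ∈ (s(j, j + 1) : Sym2 (Fin n)) := h
    rw [Sym2.mem_iff] at h'
    rcases h' with rfl | h'
    · left; rfl
    · right; left; rw [h']
  | Sum.inr f =>
    obtain ⟨k, rfl⟩ := edge_form h4 f
    obtain ⟨hne, w, hw1, hw2⟩ := h
    have hw1' : w = j ∨ w = j + 1 := by rwa [ecol_coe, Sym2.mem_iff] at hw1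
    have hw2' : w = k ∨ w = k + 1 := by rwa [ecol_coe, Sym2.mem_iff] at hw2
    rcases hw1' with rfl | rfl
    · rcases hw2' with rfl | hk
      · exact absurd rfl hne
      · right; right; left
        have : k = w - 1 := by rw [hk, add_sub_cancel_right]
        rw [this]
    · rcases hw2' with h2 | h2
      · right; right; right; rw [h2]
      · exact absurd (by rw [add_right_cancel h2] : ecol h4 j = ecol h4 k) hne

end Classify
section Tables

def aQ : Fin 4 → Finset (Fin 3) := ![∅, ∅, {0, 1}, {2}]
def bQ : Fin 4 → Finset (Fin 3) := ![{0, 1}, {2}, ∅, ∅]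
def aP : Fin 4 → Finset (Fin 3) := ![∅, ∅, {2}, {0, 1}]
def bP : Fin 4 → Finset (Fin 3) := ![{2}, {0, 1}, ∅, ∅]
def aS1 : Fin 4 → Finset (Fin 3) := ![∅, {0}, {0}, {0}]
def bS1 : Fin 4 → Finset (Fin 3) := ![{2}, ∅, {2}, {1}]
def aS2 : Fin 4 → Finset (Fin 3) := ![{0}, {1}, ∅, {0}]
def bS2 : Fin 4 → Finset (Fin 3) := ![∅, ∅, {0, 1, 2}, ∅]
def aS3 : Fin 4 → Finset (Fin 3) := ![{0}, {0}, ∅, {2}]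
def bS3 : Fin 4 → Finset (Fin 3) := ![{0, 1}, {2}, ∅, ∅]

def tblA : ℕ → Fin 4 → Finset (Fin 3)
  | 0 => aQ
  | 1 => aP
  | 2 => aS1
  | 3 => aS2
  | _ => aS3

def tblB : ℕ → Fin 4 → Finset (Fin 3)
  | 0 => bQ
  | 1 => bP
  | 2 => bS1
  | 3 => bS2
  | _ => bS3

def typ (n j : ℕ) : ℕ :=
  if n % 2 = 0 then (if j % 2 = 0 then 0 else 1)
  else if j = 0 then 2 else if j = 1 then 3 else if j = 2 then 4
  else if j % 2 = 0 then 0 else 1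

lemma typ_even {n : ℕ} (hn : n % 2 = 0) (x : ℕ) : typ n x = if x % 2 = 0 then 0 else 1 := by
  simp only [typ, if_pos hn]

lemma typ_odd0 {n : ℕ} (hn : n % 2 = 1) : typ n 0 = 2 := by
  simp only [typ]
  rw [if_neg (by omega)]
  simp

lemma typ_odd1 {n : ℕ} (hn : n % 2 = 1) : typ n 1 = 3 := by
  simp only [typ]
  rw [if_neg (by omega)]
  simp

lemma typ_odd2 {n : ℕ} (hn : n % 2 = 1) : typ n 2 = 4 := by
  simp only [typ]
  rw [if_neg (by omega)]
  simp

lemma typ_odd_big {n x : ℕ} (hn : n % 2 = 1) (hx : 3 ≤ x) :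
    typ n x = if x % 2 = 0 then 0 else 1 := by
  simp only [typ]
  rw [if_neg (by omega), if_neg (by omega), if_neg (by omega), if_neg (by omega)]

lemma typTriple {n j : ℕ} (h4 : 4 ≤ n) (hj : j < n) :
    ∀ p c s, p = typ n (if j = 0 then n - 1 else j - 1) → c = typ n j →
      s = typ n (if j = n - 1 then 0 else j + 1) →
      (p = 1 ∧ c = 0 ∧ s = 1) ∨ (p = 0 ∧ c = 1 ∧ s = 0) ∨
      (p = 0 ∧ c = 2 ∧ s = 3) ∨ (p = 2 ∧ c = 3 ∧ s = 4) ∨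
      (p = 3 ∧ c = 4 ∧ s = 1) ∨ (p = 4 ∧ c = 1 ∧ s = 0) ∨
      (p = 1 ∧ c = 0 ∧ s = 2) := by
  intro p c s hp hc hs
  subst hp hc hs
  rcases Nat.mod_two_eq_zero_or_one n with hn2 | hn2
  · -- n even
    rw [typ_even hn2, typ_even hn2, typ_even hn2]
    by_cases hjp : j % 2 = 0
    · left
      have h1 : ¬ (if j = 0 then n - 1 else j - 1) % 2 = 0 := by split_ifs <;> omega
      have h2 : ¬ (if j = n - 1 then 0 else j + 1) % 2 = 0 := by split_ifs <;> omega
      rw [if_neg h1, if_pos hjp, if_neg h2]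
      exact ⟨rfl, rfl, rfl⟩
    · right; left
      have h1 : (if j = 0 then n - 1 else j - 1) % 2 = 0 := by split_ifs <;> omega
      have h2 : (if j = n - 1 then 0 else j + 1) % 2 = 0 := by split_ifs <;> omega
      rw [if_pos h1, if_neg hjp, if_pos h2]
      exact ⟨rfl, rfl, rfl⟩
  · -- n odd, so n ≥ 5
    have h5 : 5 ≤ n := by omega
    by_cases hj0 : j = 0
    · subst hj0
      have hpv : typ n (if 0 = 0 then n - 1 else 0 - 1) = 0 := by
        rw [if_pos rfl, typ_odd_big hn2 (by omega), if_pos (by omega)]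
      have hsv : typ n (if 0 = n - 1 then 0 else 0 + 1) = 3 := by
        rw [if_neg (by omega)]
        exact typ_odd1 hn2
      rw [hpv, typ_odd0 hn2, hsv]
      right; right; left; exact ⟨rfl, rfl, rfl⟩
    by_cases hj1 : j = 1
    · subst hj1
      have hpv : typ n (if 1 = 0 then n - 1 else 1 - 1) = 2 := by
        rw [if_neg (by omega)]
        exact typ_odd0 hn2
      have hsv : typ n (if 1 = n - 1 then 0 else 1 + 1) = 4 := by
        rw [if_neg (by omega)]
        exact typ_odd2 hn2
      rw [hpv, typ_odd1 hn2, hsv]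
      right; right; right; left; exact ⟨rfl, rfl, rfl⟩
    by_cases hj2 : j = 2
    · subst hj2
      have hpv : typ n (if 2 = 0 then n - 1 else 2 - 1) = 3 := by
        rw [if_neg (by omega)]
        exact typ_odd1 hn2
      have hsv : typ n (if 2 = n - 1 then 0 else 2 + 1) = 1 := by
        rw [if_neg (by omega), typ_odd_big hn2 (by omega), if_neg (by omega)]
      rw [hpv, typ_odd2 hn2, hsv]
      right; right; right; right; left; exact ⟨rfl, rfl, rfl⟩
    have hj3 : 3 ≤ j := by omega
    have hcv : typ n j = if j % 2 = 0 then 0 else 1 := typ_odd_big hn2 hj3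
    by_cases hjl : j = n - 1
    · have hje : j % 2 = 0 := by omega
      have hpv : typ n (if j = 0 then n - 1 else j - 1) = 1 := by
        rw [if_neg hj0, typ_odd_big hn2 (by omega), if_neg (by omega)]
      have hsv : typ n (if j = n - 1 then 0 else j + 1) = 2 := by
        rw [if_pos hjl]
        exact typ_odd0 hn2
      rw [hpv, hcv, hsv, if_pos hje]
      right; right; right; right; right; right; exact ⟨rfl, rfl, rfl⟩
    · by_cases hje : j % 2 = 0
      · have hpv : typ n (if j = 0 then n - 1 else j - 1) = 1 := by
          rw [if_neg hj0, typ_odd_big hn2 (by omega), if_neg (by omega)]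
        have hsv : typ n (if j = n - 1 then 0 else j + 1) = 1 := by
          rw [if_neg hjl, typ_odd_big hn2 (by omega), if_neg (by omega)]
        rw [hpv, hcv, hsv, if_pos hje]
        left; exact ⟨rfl, rfl, rfl⟩
      · by_cases hj3' : j = 3
        · subst hj3'
          have hpv : typ n (if 3 = 0 then n - 1 else 3 - 1) = 4 := by
            rw [if_neg (by omega)]
            exact typ_odd2 hn2
          have hsv : typ n (if 3 = n - 1 then 0 else 3 + 1) = 0 := by
            rw [if_neg hjl, typ_odd_big hn2 (by omega), if_pos (by omega)]
          rw [hpv, hcv, hsv, if_neg hje]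
          right; right; right; right; right; left; exact ⟨rfl, rfl, rfl⟩
        · have hpv : typ n (if j = 0 then n - 1 else j - 1) = 0 := by
            rw [if_neg hj0, typ_odd_big hn2 (by omega), if_pos (by omega)]
          have hsv : typ n (if j = n - 1 then 0 else j + 1) = 0 := by
            rw [if_neg hjl, typ_odd_big hn2 (by omega), if_pos (by omega)]
          rw [hpv, hcv, hsv, if_neg hje]
          right; left; exact ⟨rfl, rfl, rfl⟩

def okT (p c s : ℕ) : Prop :=
  (∀ i : Fin 4, tblA c i = ∅ → ∀ x : Fin 3, x ∈ tblB p i ∨ x ∈ tblB c i) ∧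
  (∀ i : Fin 4, tblB c i = ∅ →
    ∀ x : Fin 3, x ∈ tblB p i ∨ x ∈ tblB s i ∨ x ∈ tblA c i ∨ x ∈ tblA s i)

lemma okT_all {p c s : ℕ}
    (h : (p = 1 ∧ c = 0 ∧ s = 1) ∨ (p = 0 ∧ c = 1 ∧ s = 0) ∨
      (p = 0 ∧ c = 2 ∧ s = 3) ∨ (p = 2 ∧ c = 3 ∧ s = 4) ∨
      (p = 3 ∧ c = 4 ∧ s = 1) ∨ (p = 4 ∧ c = 1 ∧ s = 0) ∨
      (p = 1 ∧ c = 0 ∧ s = 2)) : okT p c s := by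
  rcases h with ⟨rfl, rfl, rfl⟩ | ⟨rfl, rfl, rfl⟩ | ⟨rfl, rfl, rfl⟩ | ⟨rfl, rfl, rfl⟩ |
    ⟨rfl, rfl, rfl⟩ | ⟨rfl, rfl, rfl⟩ | ⟨rfl, rfl, rfl⟩ <;> constructor <;> decide

lemma budA : ∀ t, (∑ i : Fin 4, (tblA t i).card) ≤ 3
  | 0 => by decide
  | 1 => by decide
  | 2 => by decide
  | 3 => by decide
  | (t + 4) => by show (∑ i : Fin 4, (aS3 i).card) ≤ 3; decide

lemma budB : ∀ t, (∑ i : Fin 4, (tblB t i).card) ≤ 3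
  | 0 => by decide
  | 1 => by decide
  | 2 => by decide
  | 3 => by decide
  | (t + 4) => by show (∑ i : Fin 4, (bS3 i).card) ≤ 3; decide

lemma typ_zero (n : ℕ) : typ n 0 = if n % 2 = 0 then 0 else 2 := by
  simp [typ]

lemma injT0 : ∀ i k : Fin 4, tblA 0 i = tblA 0 k → tblB 0 i = tblB 0 k → i = k := by decide

lemma injT2 : ∀ i k : Fin 4, tblA 2 i = tblA 2 k → tblB 2 i = tblB 2 k → i = k := by decide

end Tables
section Construction
variable {n : ℕ} [NeZero n]

noncomputable def FF (h4 : 4 ≤ n) :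
    Fin 4 → (Fin n ⊕ (cycleGraph n).edgeSet) → Finset (Fin 3) := fun i w =>
  match w with
  | Sum.inl v => tblA (typ n v.val) i
  | Sum.inr e => tblB (typ n (eidx h4 e).val) i

variable (h4 : 4 ≤ n)

lemma FF_inl (i : Fin 4) (v : Fin n) : FF h4 i (Sum.inl v) = tblA (typ n v.val) i := rfl

lemma FF_ecol (i : Fin 4) (j : Fin n) :
    FF h4 i (Sum.inr (ecol h4 j)) = tblB (typ n j.val) i := by
  show tblB (typ n (eidx h4 (ecol h4 j)).val) i = _
  rw [eidx_ecol h4]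

lemma FF_budget : ∀ w, (∑ i : Fin 4, (FF h4 i w).card) ≤ 3 := by
  rintro (v | e)
  · exact budA _
  · exact budB _

lemma FF_isRDF (i : Fin 4) : IsRDF (middleGraph (cycleGraph n)) 3 (FF h4 i) := by
  rintro (v | e) hw c
  · -- vertex case
    have hvp := val_sub_one' h4 v
    have trip := typTriple h4 v.isLt _ _ _ rfl rfl rfl
    obtain ⟨hV, -⟩ := okT_all trip
    rw [FF_inl] at hw
    rcases hV i hw c with hc | hc
    · refine ⟨Sum.inr (ecol h4 (v - 1)), adj_vl_el h4 v, ?_⟩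
      rw [FF_ecol h4, hvp]
      exact hc
    · exact ⟨Sum.inr (ecol h4 v), adj_vl_er h4 v, by rw [FF_ecol h4]; exact hc⟩
  · -- edge case
    obtain ⟨j, rfl⟩ := edge_form h4 e
    have hvp := val_sub_one' h4 j
    have hvs := val_add_one' h4 j
    have trip := typTriple h4 j.isLt _ _ _ rfl rfl rfl
    obtain ⟨-, hE⟩ := okT_all trip
    rw [FF_ecol h4] at hw
    rcases hE i hw c with hc | hc | hc | hc
    · refine ⟨Sum.inr (ecol h4 (j - 1)), adj_e_eprev h4 j, ?_⟩
      rw [FF_ecol h4, hvp]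
      exact hc
    · refine ⟨Sum.inr (ecol h4 (j + 1)), adj_e_enext h4 j, ?_⟩
      rw [FF_ecol h4, hvs]
      exact hc
    · exact ⟨Sum.inl j, adj_e_vl h4 j, hc⟩
    · refine ⟨Sum.inl (j + 1), adj_e_vr h4 j, ?_⟩
      rw [FF_inl, hvs]
      exact hc

lemma FF_injective : Function.Injective (FF h4) := by
  intro i k h
  have h1 : tblA (typ n (0 : Fin n).val) i = tblA (typ n (0 : Fin n).val) k :=
    congrFun h (Sum.inl 0)
  have h2 : tblB (typ n (0 : Fin n).val) i = tblB (typ n (0 : Fin n).val) k := by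
    have := congrFun h (Sum.inr (ecol h4 0))
    rwa [FF_ecol h4, FF_ecol h4] at this
  rw [Fin.val_zero, typ_zero] at h1 h2
  rcases Nat.mod_two_eq_zero_or_one n with he | ho
  · rw [if_pos he] at h1 h2
    exact injT0 i k h1 h2
  · rw [if_neg (by omega)] at h1 h2
    exact injT2 i k h1 h2

end Construction
section Upper
variable {n : ℕ} [NeZero n] (h4 : 4 ≤ n)
include h4

lemma perVertex (F : Fin 5 → (Fin n ⊕ (cycleGraph n).edgeSet) → Finset (Fin 3))
    (hrdf : ∀ i, IsRDF (middleGraph (cycleGraph n)) 3 (F i))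
    (hbud : ∀ w, (∑ i : Fin 5, (F i w).card) ≤ 3) (v : Fin n) :
    (Finset.univ.filter (fun i => F i (Sum.inl v) ≠ ∅)).card = 3 ∧
    ∀ i ∈ Finset.univ.filter (fun i => F i (Sum.inl v) ≠ ∅),
      (F i (Sum.inl v)).card = 1 ∧
      F i (Sum.inr (ecol h4 (v - 1))) = ∅ ∧ F i (Sum.inr (ecol h4 v)) = ∅ := by
  classical
  set N := Finset.univ.filter (fun i => F i (Sum.inl v) ≠ ∅) with hNdef
  have hone : ∀ i ∈ N, 1 ≤ (F i (Sum.inl v)).card := by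
    intro i hi
    rw [hNdef, Finset.mem_filter] at hi
    exact Finset.card_pos.mpr (Finset.nonempty_iff_ne_empty.mpr hi.2)
  have hcardN : N.card ≤ 3 := by
    calc N.card = ∑ i ∈ N, 1 := by rw [Finset.sum_const, Nat.smul_one_eq_cast]; rfl
    _ ≤ ∑ i ∈ N, (F i (Sum.inl v)).card := Finset.sum_le_sum hone
    _ ≤ ∑ i : Fin 5, (F i (Sum.inl v)).card :=
        Finset.sum_le_sum_of_subset (Finset.subset_univ N)
    _ ≤ 3 := hbud _
  have hpair : ∀ i, F i (Sum.inl v) = ∅ →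
      3 ≤ (F i (Sum.inr (ecol h4 (v - 1)))).card + (F i (Sum.inr (ecol h4 v))).card := by
    intro i hi
    have hsub : (Finset.univ : Finset (Fin 3)) ⊆
        F i (Sum.inr (ecol h4 (v - 1))) ∪ F i (Sum.inr (ecol h4 v)) := by
      intro c _
      obtain ⟨u, hadj, hcu⟩ := hrdf i _ hi c
      rcases classify_vl h4 hadj with rfl | rfl
      · exact Finset.mem_union_left _ hcu
      · exact Finset.mem_union_right _ hcu
    calc 3 = (Finset.univ : Finset (Fin 3)).card := by simp
    _ ≤ _ := Finset.card_le_card hsub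
    _ ≤ _ := Finset.card_union_le _ _
  have hsum6 : (∑ i : Fin 5, ((F i (Sum.inr (ecol h4 (v - 1)))).card +
      (F i (Sum.inr (ecol h4 v))).card)) ≤ 6 := by
    rw [Finset.sum_add_distrib]
    have := hbud (Sum.inr (ecol h4 (v - 1)))
    have := hbud (Sum.inr (ecol h4 v))
    omega
  have hcompl : ∀ i ∈ Finset.univ \ N, F i (Sum.inl v) = ∅ := by
    intro i hi
    rw [hNdef] at hi
    simp only [Finset.mem_sdiff, Finset.mem_filter, Finset.mem_univ, true_and,
      not_not] at hi
    exact hi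
  have hcm : (Finset.univ \ N).card = 5 - N.card := by
    rw [Finset.card_sdiff_of_subset (Finset.subset_univ N)]
    simp
  have hlow : 3 * (Finset.univ \ N).card ≤
      ∑ i ∈ Finset.univ \ N, ((F i (Sum.inr (ecol h4 (v - 1)))).card +
        (F i (Sum.inr (ecol h4 v))).card) := by
    calc 3 * (Finset.univ \ N).card = ∑ i ∈ Finset.univ \ N, 3 := by
          rw [Finset.sum_const]; ring
    _ ≤ _ := Finset.sum_le_sum (fun i hi => hpair i (hcompl i hi))
  have hsplit : (∑ i ∈ Finset.univ \ N, ((F i (Sum.inr (ecol h4 (v - 1)))).card +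
      (F i (Sum.inr (ecol h4 v))).card)) +
      (∑ i ∈ N, ((F i (Sum.inr (ecol h4 (v - 1)))).card +
      (F i (Sum.inr (ecol h4 v))).card)) =
      ∑ i : Fin 5, ((F i (Sum.inr (ecol h4 (v - 1)))).card +
      (F i (Sum.inr (ecol h4 v))).card) :=
    Finset.sum_sdiff (Finset.subset_univ N)
  have hN3 : N.card = 3 := by omega
  have hzero : ∀ i ∈ N, ((F i (Sum.inr (ecol h4 (v - 1)))).card +
      (F i (Sum.inr (ecol h4 v))).card) = 0 := by
    rw [← Finset.sum_eq_zero_iff]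
    omega
  refine ⟨hN3, fun i hi => ?_⟩
  have hz := hzero i hi
  refine ⟨?_, Finset.card_eq_zero.mp (by omega), Finset.card_eq_zero.mp (by omega)⟩
  -- card = 1
  by_contra hc1
  have h2 : 2 ≤ (F i (Sum.inl v)).card := by
    have := hone i hi
    omega
  have herase : (F i (Sum.inl v)).card + ∑ j ∈ N.erase i, (F j (Sum.inl v)).card =
      ∑ j ∈ N, (F j (Sum.inl v)).card := Finset.add_sum_erase N (fun j => (F j (Sum.inl v)).card) hi
  have hcerase : (N.erase i).card = 2 := by
    rw [Finset.card_erase_of_mem hi, hN3]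
  have h1e : (N.erase i).card ≤ ∑ j ∈ N.erase i, (F j (Sum.inl v)).card := by
    calc (N.erase i).card = ∑ j ∈ N.erase i, 1 := by
          rw [Finset.sum_const, Nat.smul_one_eq_cast]; rfl
    _ ≤ _ := Finset.sum_le_sum (fun j hj => hone j (Finset.mem_of_mem_erase hj))
  have hub : ∑ j ∈ N, (F j (Sum.inl v)).card ≤ 3 :=
    le_trans (Finset.sum_le_sum_of_subset (Finset.subset_univ N)) (hbud _)
  omega

lemma no_five (F : Fin 5 → (Fin n ⊕ (cycleGraph n).edgeSet) → Finset (Fin 3))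
    (hrdf : ∀ i, IsRDF (middleGraph (cycleGraph n)) 3 (F i))
    (hbud : ∀ w, (∑ i : Fin 5, (F i w).card) ≤ 3) : False := by
  classical
  obtain ⟨hN0, hprop0⟩ := perVertex h4 F hrdf hbud 0
  obtain ⟨hN1, hprop1⟩ := perVertex h4 F hrdf hbud 1
  set N0 := Finset.univ.filter (fun i => F i (Sum.inl (0 : Fin n)) ≠ ∅)
  set N1 := Finset.univ.filter (fun i => F i (Sum.inl (1 : Fin n)) ≠ ∅)
  have hinter : 1 ≤ (N0 ∩ N1).card := by
    have h1 := Finset.card_union_add_card_inter N0 N1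
    have h2 : (N0 ∪ N1).card ≤ 5 := by
      have := Finset.card_le_univ (N0 ∪ N1)
      simpa using this
    omega
  obtain ⟨i, hi⟩ := Finset.card_pos.mp hinter
  rw [Finset.mem_inter] at hi
  obtain ⟨hc0, he0m, he0⟩ := hprop0 i hi.1
  obtain ⟨hc1, he1m, he1⟩ := hprop1 i hi.2
  -- F i (ecol 0) = ∅ (from he0), F i (ecol (0-1)) = ∅ (he0m),
  -- F i (ecol 1) = ∅ (he1), and ecol (1-1) = ecol 0.
  have hsub : (Finset.univ : Finset (Fin 3)) ⊆
      F i (Sum.inl (0 : Fin n)) ∪ F i (Sum.inl (1 : Fin n)) := by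
    intro c _
    obtain ⟨u, hadj, hcu⟩ := hrdf i (Sum.inr (ecol h4 0)) he0 c
    rcases classify_e h4 hadj with rfl | rfl | rfl | rfl
    · exact Finset.mem_union_left _ hcu
    · rw [zero_add] at hcu
      exact Finset.mem_union_right _ hcu
    · rw [he0m] at hcu
      exact absurd hcu (Finset.notMem_empty c)
    · rw [zero_add, he1] at hcu
      exact absurd hcu (Finset.notMem_empty c)
  have : 3 ≤ (F i (Sum.inl (0 : Fin n))).card + (F i (Sum.inl (1 : Fin n))).card := by
    calc 3 = (Finset.univ : Finset (Fin 3)).card := by simp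
    _ ≤ _ := Finset.card_le_card hsub
    _ ≤ _ := Finset.card_union_le _ _
  omega

end Upper

/-- For `n ≥ 4`, `d_{r3}(M(C_n)) = 4`. -/
theorem stmt13 (n : ℕ) (hn : 4 ≤ n) :
    rdomatic (middleGraph (cycleGraph n)) 3 = 4 := by
  haveI : NeZero n := ⟨by omega⟩
  have h4mem : 4 ∈ {d | ∃ F : Fin d → (Fin n ⊕ (cycleGraph n).edgeSet) → Finset (Fin 3),
      Function.Injective F ∧ (∀ i, IsRDF (middleGraph (cycleGraph n)) 3 (F i)) ∧
      ∀ w, (∑ i, (F i w).card) ≤ 3} :=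
    ⟨FF hn, FF_injective hn, FF_isRDF hn, FF_budget hn⟩
  have hub : ∀ d ∈ {d | ∃ F : Fin d → (Fin n ⊕ (cycleGraph n).edgeSet) → Finset (Fin 3),
      Function.Injective F ∧ (∀ i, IsRDF (middleGraph (cycleGraph n)) 3 (F i)) ∧
      ∀ w, (∑ i, (F i w).card) ≤ 3}, d ≤ 4 := by
    rintro d ⟨F, hinj, hrdf, hbud⟩
    by_contra hlt
    push_neg at hlt
    have h5 : 5 ≤ d := hlt
    apply no_five hn (fun i => F (Fin.castLE h5 i)) (fun i => hrdf _)
    intro w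
    have heq : ∑ i : Fin 5, (F (Fin.castLE h5 i) w).card
        = ∑ j ∈ Finset.univ.map ⟨Fin.castLE h5, Fin.castLE_injective h5⟩, (F j w).card := by
      rw [Finset.sum_map]
      rfl
    rw [heq]
    exact le_trans (Finset.sum_le_sum_of_subset (Finset.subset_univ _)) (hbud w)
  exact le_antisymm (csSup_le ⟨4, h4mem⟩ hub) (le_csSup ⟨4, hub⟩ h4mem)
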